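/- Let n, m, p ≥ 1, let A ∈ ℝ^{n×n}, B ∈ ℝ^{n×m}, C ∈ ℝ^{p×n}, D ∈ ℝ^{p×m} and γ > 0. Then there exists a symmetric positive definite P ∈ ℝ^{n×n} satisfying the bounded-real LMI with gain γ if and only if there exists a symmetric positive definite P ∈ ℝ^{n×n} such that the 4×4 block matrix [[P, PA, PB, 0],[AᵀP, P, 0, Cᵀ],[BᵀP, 0, γI, Dᵀ],[0, C, D, γI]] is positive definite. -/

import Mathlib

open Matrix

-- positivity preserved under scalar multiplication
lemma myPosDef_smul {k : Type*} [Fintype k] {M : Matrix k k ℝ} (hM : M.PosDef)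
    {c : ℝ} (hc : 0 < c) : (c • M).PosDef := by
  refine posDef_iff_dotProduct_mulVec.mpr ⟨?_, fun x hx => ?_⟩
  · unfold Matrix.IsHermitian
    rw [conjTranspose_smul, hM.1.eq]
    simp
  · rw [smul_mulVec, dotProduct_smul]
    exact smul_pos hc (hM.dotProduct_mulVec_pos hx)

lemma myPosDef_smul_iff {k : Type*} [Fintype k] {M : Matrix k k ℝ}
    {c : ℝ} (hc : 0 < c) : (c • M).PosDef ↔ M.PosDef := by
  constructor
  · intro h
    have := myPosDef_smul h (inv_pos.mpr hc)
    rwa [smul_smul, inv_mul_cancel₀ hc.ne', one_smul] at this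
  · exact fun h => myPosDef_smul h hc

-- posdef under submatrix by an equiv
lemma myPosDef_submatrix {k l : Type*} [Fintype k] [Fintype l] {M : Matrix k k ℝ}
    (hM : M.PosDef) (e : l ≃ k) : (M.submatrix e e).PosDef := by
  refine posDef_iff_dotProduct_mulVec.mpr ⟨hM.1.submatrix e, fun x hx => ?_⟩
  rw [submatrix_mulVec_equiv]
  have hx' : x ∘ e.symm ≠ 0 := by
    intro h0
    apply hx
    ext i
    have := congrFun h0 (e i)
    simpa using this
  have := hM.dotProduct_mulVec_pos hx'
  convert this using 1
  simp only [dotProduct]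
  exact Fintype.sum_equiv e _ _ (fun i => by simp)

lemma myPosDef_submatrix_iff {k l : Type*} [Fintype k] [Fintype l] {M : Matrix k k ℝ}
    (e : l ≃ k) : (M.submatrix e e).PosDef ↔ M.PosDef := by
  constructor
  · intro h
    have := myPosDef_submatrix h e.symm
    simpa [submatrix_submatrix] using this
  · exact fun h => myPosDef_submatrix h e

-- Positive definite Schur complement criterion (real version)
lemma myPosDef_fromBlocks₁₁ {k l : Type*} [Fintype k] [DecidableEq k] [Fintype l]
    {A : Matrix k k ℝ} (B : Matrix k l ℝ) (D : Matrix l l ℝ) (hA : A.PosDef) [Invertible A] :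
    (fromBlocks A B Bᴴ D).PosDef ↔ (D - Bᴴ * A⁻¹ * B).PosDef := by
  rw [posDef_iff_dotProduct_mulVec, posDef_iff_dotProduct_mulVec, Matrix.IsHermitian.fromBlocks₁₁ _ _ hA.1]
  constructor
  · refine fun h => ⟨h.1, fun x hx => ?_⟩
    have hel : (Sum.elim (-((A⁻¹ * B) *ᵥ x)) x) ≠ 0 := by
      intro h0
      exact hx (funext fun i => congrFun h0 (Sum.inr i))
    have := h.2 hel
    rw [dotProduct_mulVec, schur_complement_eq₁₁ B D _ _ hA.1, neg_add_cancel, dotProduct_zero,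
      zero_add] at this
    rw [dotProduct_mulVec]
    exact this
  · refine fun h => ⟨h.1, fun x hx => ?_⟩
    rw [dotProduct_mulVec, ← Sum.elim_comp_inl_inr x, schur_complement_eq₁₁ B D _ _ hA.1]
    by_cases hy : x ∘ Sum.inr = 0
    · have hx1 : x ∘ Sum.inl ≠ 0 := by
        intro h0
        apply hx
        funext i
        cases i with
        | inl i => exact congrFun h0 i
        | inr i => exact congrFun hy i
      rw [hy]
      simp only [mulVec_zero, add_zero, star_zero, zero_vecMul, zero_dotProduct, dotProduct_zero]
      rw [← dotProduct_mulVec]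
      exact hA.dotProduct_mulVec_pos hx1
    · apply add_pos_of_nonneg_of_pos
      · rw [← dotProduct_mulVec]
        exact hA.posSemidef.dotProduct_mulVec_nonneg _
      · rw [← dotProduct_mulVec]
        exact h.2 hy

lemma myPosDef_blockDiag {k l : Type*} [Fintype k] [DecidableEq k] [Fintype l]
    {A : Matrix k k ℝ} {D : Matrix l l ℝ} (hA : A.PosDef) (hD : D.PosDef) :
    (fromBlocks A 0 0 D).PosDef := by
  haveI := hA.isUnit.invertible
  have h := myPosDef_fromBlocks₁₁ (0 : Matrix k l ℝ) D hA
  rw [conjTranspose_zero] at h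
  rw [h]
  simpa using hD

def myEquiv (n m p : ℕ) : ((Fin n ⊕ Fin p) ⊕ (Fin n ⊕ Fin m)) ≃ ((Fin n ⊕ Fin n) ⊕ (Fin m ⊕ Fin p)) where
  toFun x := match x with
    | .inl (.inl i) => .inl (.inl i)
    | .inl (.inr j) => .inr (.inr j)
    | .inr (.inl i) => .inl (.inr i)
    | .inr (.inr j) => .inr (.inl j)
  invFun x := match x with
    | .inl (.inl i) => .inl (.inl i)
    | .inl (.inr i) => .inr (.inl i)
    | .inr (.inl j) => .inr (.inr j)
    | .inr (.inr j) => .inl (.inr j)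
  left_inv := by rintro ((i|i)|(i|i)) <;> rfl
  right_inv := by rintro ((i|i)|(i|i)) <;> rfl

lemma key {n m p : ℕ}
    (A : Matrix (Fin n) (Fin n) ℝ) (B : Matrix (Fin n) (Fin m) ℝ)
    (C : Matrix (Fin p) (Fin n) ℝ) (D : Matrix (Fin p) (Fin m) ℝ)
    {γ : ℝ} (hγ : 0 < γ) {P : Matrix (Fin n) (Fin n) ℝ} (hP : P.PosDef) :
    (Matrix.fromBlocks
        (Matrix.fromBlocks P (P * A) (Aᵀ * P) P)
        (Matrix.fromBlocks (P * B) 0 0 Cᵀ)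
        (Matrix.fromBlocks (Bᵀ * P) 0 0 C)
        (Matrix.fromBlocks (γ • (1 : Matrix (Fin m) (Fin m) ℝ)) Dᵀ
          D (γ • (1 : Matrix (Fin p) (Fin p) ℝ)))).PosDef ↔
    (-(Matrix.fromBlocks
          (Aᵀ * (γ • P) * A - γ • P + Cᵀ * C) (Aᵀ * (γ • P) * B + Cᵀ * D)
          (Bᵀ * (γ • P) * A + Dᵀ * C) (Bᵀ * (γ • P) * B + Dᵀ * D - γ ^ 2 • 1))).PosDef := by
  set X : Matrix (Fin n ⊕ Fin p) (Fin n ⊕ Fin p) ℝ :=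
    fromBlocks P 0 0 (γ • (1 : Matrix (Fin p) (Fin p) ℝ)) with hX
  set K : Matrix (Fin n ⊕ Fin p) (Fin n ⊕ Fin m) ℝ :=
    fromBlocks (P * A) (P * B) C D with hK
  set Y : Matrix (Fin n ⊕ Fin m) (Fin n ⊕ Fin m) ℝ :=
    fromBlocks P 0 0 (γ • (1 : Matrix (Fin m) (Fin m) ℝ)) with hY
  have hPtrans : Pᵀ = P := hP.1
  have hXpd : X.PosDef := myPosDef_blockDiag hP (myPosDef_smul Matrix.PosDef.one hγ)
  haveI : Invertible X := hXpd.isUnit.invertible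
  haveI : Invertible P := hP.isUnit.invertible
  have hKH : Kᴴ = fromBlocks (Aᵀ * P) Cᵀ (Bᵀ * P) Dᵀ := by
    rw [hK, fromBlocks_conjTranspose]
    simp [conjTranspose_eq_transpose_of_trivial, transpose_mul, hPtrans]
  have hperm : (fromBlocks X K Kᴴ Y).submatrix (myEquiv n m p).symm (myEquiv n m p).symm =
      (Matrix.fromBlocks
        (Matrix.fromBlocks P (P * A) (Aᵀ * P) P)
        (Matrix.fromBlocks (P * B) 0 0 Cᵀ)
        (Matrix.fromBlocks (Bᵀ * P) 0 0 C)
        (Matrix.fromBlocks (γ • (1 : Matrix (Fin m) (Fin m) ℝ)) Dᵀ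
          D (γ • (1 : Matrix (Fin p) (Fin p) ℝ)))) := by
    rw [hKH, hX, hK, hY]
    ext i j
    rcases i with (i|i)|(i|i) <;> rcases j with (j|j)|(j|j) <;> rfl
  have hXinv : X⁻¹ = fromBlocks P⁻¹ 0 0 (γ⁻¹ • (1 : Matrix (Fin p) (Fin p) ℝ)) := by
    apply inv_eq_right_inv
    rw [hX, fromBlocks_multiply]
    simp [Matrix.mul_nonsing_inv _ (Matrix.isUnit_iff_isUnit_det _ |>.mp hP.isUnit),
      smul_smul, mul_inv_cancel₀ hγ.ne', inv_mul_cancel₀ hγ.ne', fromBlocks_one]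
  have hschur := myPosDef_fromBlocks₁₁ K Y hXpd
  have hSeq : Y - Kᴴ * X⁻¹ * K =
      γ⁻¹ • (-(Matrix.fromBlocks
          (Aᵀ * (γ • P) * A - γ • P + Cᵀ * C) (Aᵀ * (γ • P) * B + Cᵀ * D)
          (Bᵀ * (γ • P) * A + Dᵀ * C) (Bᵀ * (γ • P) * B + Dᵀ * D - γ ^ 2 • 1))) := by
    rw [hKH, hXinv, hK, hY, Matrix.mul_assoc, fromBlocks_multiply, fromBlocks_multiply,
      fromBlocks_neg, fromBlocks_smul, sub_eq_add_neg, fromBlocks_neg, fromBlocks_add]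
    rw [fromBlocks_inj]
    refine ⟨?_, ?_, ?_, ?_⟩ <;>
    · simp only [Matrix.zero_mul, Matrix.mul_zero, add_zero, zero_add, Matrix.smul_mul,
        Matrix.mul_smul, Matrix.one_mul, Matrix.inv_mul_cancel_left_of_invertible]
      match_scalars <;> field_simp <;> ring
  rw [← hperm, myPosDef_submatrix_iff, hschur, hSeq, myPosDef_smul_iff (inv_pos.mpr hγ)]

theorem stmt3 {n m p : ℕ} (hn : 1 ≤ n) (hm : 1 ≤ m) (hp : 1 ≤ p)
    (A : Matrix (Fin n) (Fin n) ℝ) (B : Matrix (Fin n) (Fin m) ℝ)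
    (C : Matrix (Fin p) (Fin n) ℝ) (D : Matrix (Fin p) (Fin m) ℝ)
    (γ : ℝ) (hγ : 0 < γ) :
    (∃ P : Matrix (Fin n) (Fin n) ℝ, P.PosDef ∧
      (-(Matrix.fromBlocks
          (Aᵀ * P * A - P + Cᵀ * C) (Aᵀ * P * B + Cᵀ * D)
          (Bᵀ * P * A + Dᵀ * C) (Bᵀ * P * B + Dᵀ * D - γ ^ 2 • 1))).PosDef) ↔
    (∃ P : Matrix (Fin n) (Fin n) ℝ, P.PosDef ∧
      (Matrix.fromBlocks
        (Matrix.fromBlocks P (P * A) (Aᵀ * P) P)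
        (Matrix.fromBlocks (P * B) 0 0 Cᵀ)
        (Matrix.fromBlocks (Bᵀ * P) 0 0 C)
        (Matrix.fromBlocks (γ • (1 : Matrix (Fin m) (Fin m) ℝ)) Dᵀ
          D (γ • (1 : Matrix (Fin p) (Fin p) ℝ)))).PosDef) := by
  constructor
  · rintro ⟨P₀, hP₀, h⟩
    refine ⟨γ⁻¹ • P₀, myPosDef_smul hP₀ (inv_pos.mpr hγ), ?_⟩
    apply (key A B C D hγ (myPosDef_smul hP₀ (inv_pos.mpr hγ))).mpr
    rw [smul_smul, mul_inv_cancel₀ hγ.ne', one_smul]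
    exact h
  · rintro ⟨P, hP, h⟩
    exact ⟨γ • P, myPosDef_smul hP hγ, (key A B C D hγ hP).mp h⟩
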